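/- Let K ⊆ ℝ² be a nonempty compact connected set, and define S*(K) = { s > 0 : ∀ p ∈ K, p + (s, 0) ∉ K }. Then S*(K) is additive: if a ∈ S*(K) and b ∈ S*(K), then a + b ∈ S*(K). -/

import Mathlib

set_option maxHeartbeats 1000000

open List

namespace HopfAux

noncomputable def ind (P : Prop) : ZMod 2 := by classical exact if P then 1 else 0

lemma ind_pos {P : Prop} (h : P) : ind P = 1 := by simp [ind, h]
lemma ind_neg {P : Prop} (h : ¬ P) : ind P = 0 := by simp [ind, h]

noncomputable def esum (f : ℤ×ℤ → ℤ×ℤ → ZMod 2) : List (ℤ×ℤ) → ZMod 2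
  | u :: v :: l => f u v + esum f (v :: l)
  | _ => 0

lemma esum_cons (f) (u v : ℤ×ℤ) (l) : esum f (u :: v :: l) = f u v + esum f (v :: l) := rfl

lemma esum_congr {f g : ℤ×ℤ → ℤ×ℤ → ZMod 2} : ∀ {l : List (ℤ×ℤ)},
    List.Chain' (fun u v => f u v = g u v) l → esum f l = esum g l
  | [], _ => rfl
  | [_], _ => rfl
  | u :: v :: l, h => by
      unfold List.Chain' at h
      rw [List.isChain_cons_cons] at h
      rw [esum_cons, esum_cons, h.1, esum_congr h.2]

lemma esum_add (f g : ℤ×ℤ → ℤ×ℤ → ZMod 2) : ∀ (l : List (ℤ×ℤ)),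
    esum (fun u v => f u v + g u v) l = esum f l + esum g l
  | [] => by simp [esum]
  | [u] => by simp [esum]
  | u :: v :: l => by
      rw [esum_cons, esum_cons, esum_cons, esum_add f g (v :: l)]
      ring

lemma esum_zero' {f : ℤ×ℤ → ℤ×ℤ → ZMod 2} : ∀ {l : List (ℤ×ℤ)},
    List.Chain' (fun u v => f u v = 0) l → esum f l = 0
  | [], _ => rfl
  | [_], _ => rfl
  | u :: v :: l, h => by
      unfold List.Chain' at h
      rw [List.isChain_cons_cons] at h
      rw [esum_cons, h.1, esum_zero' h.2, add_zero]

lemma esum_telescope {f : ℤ×ℤ → ℤ×ℤ → ZMod 2} {g : ℤ×ℤ → ZMod 2} :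
    ∀ {l : List (ℤ×ℤ)} (hne : l ≠ []),
    List.Chain' (fun u v => f u v = g u + g v) l →
    esum f l = g (l.head hne) + g (l.getLast hne)
  | [], hne, _ => absurd rfl hne
  | [u], _, _ => by
      have h2 : ∀ x : ZMod 2, x + x = 0 := by decide
      simp [esum, List.head, List.getLast, (h2 (g u)).symm]
  | u :: v :: l, _, h => by
      unfold List.Chain' at h
      rw [List.isChain_cons_cons] at h
      rw [esum_cons, h.1, esum_telescope (l := v :: l) (by simp) h.2]
      have hlast : (u :: v :: l).getLast (by simp) = (v :: l).getLast (by simp) := by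
        simp [List.getLast_cons]
      rw [hlast]
      have : ∀ x y z : ZMod 2, (x + y) + (y + z) = x + z := by decide
      simpa using this (g u) (g v) (g ((v :: l).getLast (by simp)))

/-- 4-adjacency on the integer grid. -/
def Adj (u v : ℤ×ℤ) : Prop :=
  (u.2 = v.2 ∧ (v.1 = u.1 + 1 ∨ u.1 = v.1 + 1)) ∨ (u.1 = v.1 ∧ (v.2 = u.2 + 1 ∨ u.2 = v.2 + 1))

/-- parity indicator: the edge (u,v) is horizontal, at row ≤ t.2, spanning columns {t.1, t.1+1}. -/
noncomputable def cross (t u v : ℤ×ℤ) : ZMod 2 :=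
  ind (u.2 = v.2 ∧ u.2 ≤ t.2 ∧ min u.1 v.1 = t.1)

lemma chain'_mem {α : Type*} {R : α → α → Prop} {l : List α} (h : List.Chain' R l) :
    List.Chain' (fun u v => R u v ∧ u ∈ l ∧ v ∈ l) l := by
  unfold List.Chain' at h ⊢
  rw [List.isChain_iff_getElem] at h ⊢
  intro i hi
  exact ⟨h i hi, List.getElem_mem _, List.getElem_mem _⟩

lemma min_side {x y p r : ℤ} (hmin : min x y = p) :
    (p, r) = ((x : ℤ), (r : ℤ)) ∨ (p, r) = (y, r) := by
  rcases min_cases x y with ⟨h1, _⟩ | ⟨h1, _⟩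
  · left; rw [← hmin, h1]
  · right; rw [← hmin, h1]

theorem discrete_crossing (m n : ℤ) (S T : Set (ℤ×ℤ))
    (hST : ∀ c, c ∈ S → c ∉ T)
    (hSr : ∀ c ∈ S, 0 ≤ c.1 ∧ c.1 < m ∧ 0 ≤ c.2 ∧ c.2 < n)
    (hTr : ∀ c ∈ T, 0 ≤ c.1 ∧ c.1 < m ∧ 0 ≤ c.2 ∧ c.2 < n)
    (γ : List (ℤ×ℤ)) (hγne : γ ≠ []) (hγc : List.Chain' Adj γ) (hγS : ∀ c ∈ γ, c ∈ S)
    (hγh : (γ.head hγne).1 = 0) (hγl : (γ.getLast hγne).1 = m - 1)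
    (τ : List (ℤ×ℤ)) (hτne : τ ≠ []) (hτc : List.Chain' Adj τ) (hτT : ∀ c ∈ τ, c ∈ T)
    (hτh : (τ.head hτne).2 = 0) (hτl : (τ.getLast hτne).2 = n - 1) : False := by
  classical
  set j₀ := (γ.head hγne).2 with hj₀
  set j₁ := (γ.getLast hγne).2 with hj₁
  set e1 : ℤ×ℤ := (-2, j₀) with he1
  set e2 : ℤ×ℤ := (-1, j₀) with he2
  set e3 : ℤ×ℤ := (m, j₁) with he3
  set e4 : ℤ×ℤ := (m+1, j₁) with he4
  set G : List (ℤ×ℤ) := e1 :: e2 :: (γ ++ [e3, e4]) with hG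
  have hγhm : γ.head hγne ∈ γ := List.head_mem hγne
  have hγlm : γ.getLast hγne ∈ γ := List.getLast_mem hγne
  have hj₀r : 0 ≤ j₀ ∧ j₀ < n := ⟨(hSr _ (hγS _ hγhm)).2.2.1, (hSr _ (hγS _ hγhm)).2.2.2⟩
  have hj₁r : 0 ≤ j₁ ∧ j₁ < n := ⟨(hSr _ (hγS _ hγlm)).2.2.1, (hSr _ (hγS _ hγlm)).2.2.2⟩
  have hm1 : 1 ≤ m := by
    have := (hSr _ (hγS _ hγhm)).2.1; omega
  have hGne : G ≠ [] := by simp [hG]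
  have hGhead : G.head hGne = e1 := rfl
  have hGlast : G.getLast hGne = e4 := by
    simp only [hG]
    rw [List.getLast_cons (by simp), List.getLast_cons (by simp),
      List.getLast_append_of_ne_nil _ (by simp)]
    rfl
  have hGmem : ∀ c ∈ G, c ∈ S ∨ c = e1 ∨ c = e2 ∨ c = e3 ∨ c = e4 := by
    intro c hc
    simp only [hG, List.mem_cons, List.mem_append, List.mem_singleton] at hc
    rcases hc with h|h|h|h|h
    · exact Or.inr (Or.inl h)
    · exact Or.inr (Or.inr (Or.inl h))
    · exact Or.inl (hγS _ h)
    · exact Or.inr (Or.inr (Or.inr (Or.inl h)))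
    · exact Or.inr (Or.inr (Or.inr (Or.inr (by tauto))))
  -- any cell of G with column in [0, m-1] is in S
  have colS : ∀ c ∈ G, 0 ≤ c.1 → c.1 ≤ m - 1 → c ∈ S := by
    intro c hc h0 h1
    rcases hGmem c hc with h|h|h|h|h
    · exact h
    all_goals (exfalso; rw [h] at h0 h1; simp only [he1, he2, he3, he4] at h0 h1; omega)
  -- rows of G are within [0, n-1]
  have rowG : ∀ c ∈ G, 0 ≤ c.2 ∧ c.2 ≤ n - 1 := by
    intro c hc
    rcases hGmem c hc with h|h|h|h|h
    · have := hSr _ h; omega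
    all_goals (rw [h]; simp only [he1, he2, he3, he4]; omega)
  -- the chain property of G
  have c34 : List.Chain' Adj [e3, e4] := by
    refine List.isChain_pair.mpr ?_
    left
    exact ⟨rfl, Or.inl rfl⟩
  have cl34 : List.Chain' Adj (γ ++ [e3, e4]) := by
    refine List.IsChain.append hγc c34 ?_
    intro x hx y hy
    rw [List.getLast?_eq_getLast hγne] at hx
    simp only [List.head?_cons, Option.mem_some_iff] at hx hy
    subst hx; subst hy
    left
    refine ⟨rfl, Or.inl ?_⟩
    show e3.1 = _ + 1
    rw [hγl]; simp only [he3]; omega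
  have hGc : List.Chain' Adj G := by
    rw [hG]
    refine List.IsChain.cons_cons ?_ (List.IsChain.cons cl34 ?_)
    · left
      refine ⟨rfl, Or.inl ?_⟩
      show e2.1 = e1.1 + 1
      simp only [he1, he2]; omega
    · intro y hy
      rw [List.head?_append_of_ne_nil γ hγne, List.head?_eq_head hγne] at hy
      simp only [Option.mem_some_iff] at hy
      subst hy
      left
      refine ⟨rfl, Or.inl ?_⟩
      rw [hγh]
      simp only [he2]; omega
  -- helper: a 2/ZMod fact
  have z2 : ∀ x y : ZMod 2, x + y = 0 → x = y := by decide
  have z2' : ∀ x : ZMod 2, x + x = 0 := by decide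
  -- the parity function
  set Wf : ℤ×ℤ → ZMod 2 := fun t => esum (cross t) G with hWf
  -- extract the S-cell sitting at the min end of a horizontal edge
  have cellS : ∀ (p r : ℤ) (u v : ℤ×ℤ), u ∈ G → v ∈ G → u.2 = v.2 → u.2 = r →
      min u.1 v.1 = p → 0 ≤ p → p ≤ m - 1 → (p, r) ∈ S := by
    intro p r u v hu hv h2 hr hmin h0 h1
    rcases min_cases u.1 v.1 with ⟨hm', _⟩ | ⟨hm', _⟩
    · have hpu : (p, r) = u := by
        rw [← hmin, hm', ← hr]
      rw [hpu]
      exact colS u hu (by omega) (by omega)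
    · have hvr : v.2 = r := h2 ▸ hr
      have hpv : (p, r) = v := by
        rw [← hmin, hm', ← hvr]
      rw [hpv]
      exact colS v hv (by omega) (by omega)
  -- extract the S-cell at the min end of a vertical edge
  have cellS' : ∀ (g q : ℤ) (u v : ℤ×ℤ), u ∈ G → v ∈ G → u.1 = v.1 → u.1 = g →
      min u.2 v.2 = q → 0 ≤ g → g ≤ m - 1 → (g, q) ∈ S := by
    intro g q u v hu hv h1 hg hmin h0 h1'
    rcases min_cases u.2 v.2 with ⟨hm', _⟩ | ⟨hm', _⟩
    · have hpu : (g, q) = u := by rw [← hmin, hm', ← hg]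
      rw [hpu]
      exact colS u hu (by omega) (by omega)
    · have hvg : v.1 = g := h1 ▸ hg
      have hpv : (g, q) = v := by rw [← hmin, hm', ← hvg]
      rw [hpv]
      exact colS v hv (by omega) (by omega)
  -- vertical step invariance
  have stepV : ∀ p q : ℤ, (p, q+1) ∈ T → 0 ≤ p → p ≤ m - 1 → Wf (p, q) = Wf (p, q+1) := by
    intro p q hT h0 h1
    have pointwise : ∀ u v : ℤ×ℤ, cross (p, q+1) u v
        = cross (p, q) u v + ind (u.2 = v.2 ∧ u.2 = q+1 ∧ min u.1 v.1 = p) := by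
      intro u v
      simp only [cross]
      by_cases h2 : u.2 = v.2
      · by_cases hmin : min u.1 v.1 = p
        · rcases lt_trichotomy u.2 (q+1) with hr | hr | hr
          · rw [ind_pos ⟨h2, by omega, hmin⟩, ind_pos ⟨h2, by omega, hmin⟩,
              ind_neg (fun hc => by omega)]
            try decide
          · rw [ind_pos ⟨h2, by omega, hmin⟩, ind_neg (fun hc => by omega),
              ind_pos ⟨h2, by omega, hmin⟩]
            try decide
          · rw [ind_neg (fun hc => by omega), ind_neg (fun hc => by omega),
              ind_neg (fun hc => by omega)]
            try decide
        · rw [ind_neg (fun hc => hmin hc.2.2), ind_neg (fun hc => hmin hc.2.2),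
            ind_neg (fun hc => hmin hc.2.2)]
          try decide
      · rw [ind_neg (fun hc => h2 hc.1), ind_neg (fun hc => h2 hc.1),
          ind_neg (fun hc => h2 hc.1)]
        try decide
    have e1' : esum (cross (p, q+1)) G
        = esum (fun u v => cross (p, q) u v + ind (u.2 = v.2 ∧ u.2 = q+1 ∧ min u.1 v.1 = p)) G := by
      apply esum_congr
      exact List.IsChain.imp (fun a b _ => pointwise a b) hGc
    have e2' : esum (fun u v => cross (p, q) u v + ind (u.2 = v.2 ∧ u.2 = q+1 ∧ min u.1 v.1 = p)) G
        = esum (cross (p,q)) G + esum (fun u v => ind (u.2 = v.2 ∧ u.2 = q+1 ∧ min u.1 v.1 = p)) G :=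
      esum_add _ _ G
    have e3' : esum (fun u v => ind (u.2 = v.2 ∧ u.2 = q+1 ∧ min u.1 v.1 = p)) G = 0 := by
      apply esum_zero'
      refine List.IsChain.imp ?_ (chain'_mem hGc)
      rintro a b ⟨hA, ha, hb⟩
      exact ind_neg (fun hc => hST _ (cellS p (q+1) a b ha hb hc.1 hc.2.1 hc.2.2 h0 h1) hT)
    simp only [hWf]
    rw [e1', e2', e3', add_zero]
  -- horizontal step invariance
  have stepH : ∀ p q : ℤ, (p, q) ∈ T → (p+1, q) ∈ T → Wf (p, q) = Wf (p+1, q) := by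
    intro p q hT hT'
    have h0 : 0 ≤ p := (hTr _ hT).1
    have h1 : p + 1 ≤ m - 1 := by have := (hTr _ hT').2.1; omega
    have hq0 : 0 ≤ q := (hTr _ hT).2.2.1
    have hq1 : q ≤ n - 1 := by have := (hTr _ hT).2.2.2; omega
    set X : ℤ×ℤ → ℤ×ℤ → ZMod 2 := fun u v => ind (u.1 = v.1 ∧ u.1 = p+1 ∧ min u.2 v.2 = q) with hX
    set g : ℤ×ℤ → ZMod 2 := fun w => ind (w.1 = p+1 ∧ w.2 ≤ q) with hg
    have per : ∀ u v : ℤ×ℤ, Adj u v →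
        cross (p, q) u v + cross (p+1, q) u v + X u v = g u + g v := by
      intro u v hA
      rcases hA with ⟨h2, hd⟩ | ⟨h1', hd⟩
      · -- horizontal edge
        have hXz : X u v = 0 := by
          apply ind_neg; rintro ⟨ha, -, -⟩; omega
        simp only [cross, hg, hXz, add_zero]
        by_cases hr : u.2 ≤ q
        · have hvr : v.2 ≤ q := by omega
          rcases hd with hd | hd
          · have hmin : min u.1 v.1 = u.1 := by omega
            rcases lt_trichotomy u.1 p with hc | hc | hc
            · rw [ind_neg (fun hc' => by omega), ind_neg (fun hc' => by omega),
                ind_neg (fun hc' => by omega), ind_neg (fun hc' => by omega)]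
              try decide
            · rw [ind_pos ⟨h2, hr, by omega⟩, ind_neg (fun hc' => by omega),
                ind_neg (fun hc' => by omega), ind_pos ⟨by omega, hvr⟩]
              try decide
            · rcases eq_or_lt_of_le (by omega : p + 1 ≤ u.1) with hc2 | hc2
              · rw [ind_neg (fun hc' => by omega), ind_pos ⟨h2, hr, by omega⟩,
                  ind_pos ⟨by omega, hr⟩, ind_neg (fun hc' => by omega)]
                try decide
              · rw [ind_neg (fun hc' => by omega), ind_neg (fun hc' => by omega),
                  ind_neg (fun hc' => by omega), ind_neg (fun hc' => by omega)]
                try decide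
          · have hmin : min u.1 v.1 = v.1 := by omega
            rcases lt_trichotomy v.1 p with hc | hc | hc
            · rw [ind_neg (fun hc' => by omega), ind_neg (fun hc' => by omega),
                ind_neg (fun hc' => by omega), ind_neg (fun hc' => by omega)]
              try decide
            · rw [ind_pos ⟨h2, hr, by omega⟩, ind_neg (fun hc' => by omega),
                ind_pos ⟨by omega, hr⟩, ind_neg (fun hc' => by omega)]
              try decide
            · rcases eq_or_lt_of_le (by omega : p + 1 ≤ v.1) with hc2 | hc2
              · rw [ind_neg (fun hc' => by omega), ind_pos ⟨h2, hr, by omega⟩,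
                  ind_neg (fun hc' => by omega), ind_pos ⟨by omega, hvr⟩]
                try decide
              · rw [ind_neg (fun hc' => by omega), ind_neg (fun hc' => by omega),
                  ind_neg (fun hc' => by omega), ind_neg (fun hc' => by omega)]
                try decide
        · have hvr : ¬ (v.2 ≤ q) := by omega
          rw [ind_neg (fun hc' => hr hc'.2.1), ind_neg (fun hc' => hr hc'.2.1),
            ind_neg (fun hc' => hr hc'.2), ind_neg (fun hc' => hvr hc'.2)]
          try decide
      · -- vertical edge
        have hcz : cross (p, q) u v = 0 := by
          apply ind_neg; rintro ⟨ha, -, -⟩; omega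
        have hcz' : cross (p+1, q) u v = 0 := by
          apply ind_neg; rintro ⟨ha, -, -⟩; omega
        simp only [hcz, hcz', zero_add, hX, hg]
        by_cases hup : u.1 = p + 1
        · have hvp : v.1 = p + 1 := by omega
          rcases hd with hd | hd
          · have hmin : min u.2 v.2 = u.2 := by omega
            rcases lt_trichotomy u.2 q with hc | hc | hc
            · rw [ind_neg (fun hc' => by omega), ind_pos ⟨hup, by omega⟩,
                ind_pos ⟨hvp, by omega⟩]
              try decide
            · rw [ind_pos ⟨h1', hup, by omega⟩, ind_pos ⟨hup, by omega⟩,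
                ind_neg (fun hc' => by omega)]
              try decide
            · rw [ind_neg (fun hc' => by omega), ind_neg (fun hc' => by omega),
                ind_neg (fun hc' => by omega)]
              try decide
          · have hmin : min u.2 v.2 = v.2 := by omega
            rcases lt_trichotomy v.2 q with hc | hc | hc
            · rw [ind_neg (fun hc' => by omega), ind_pos ⟨hup, by omega⟩,
                ind_pos ⟨hvp, by omega⟩]
              try decide
            · rw [ind_pos ⟨h1', hup, by omega⟩, ind_neg (fun hc' => by omega),
                ind_pos ⟨hvp, by omega⟩]
              try decide
            · rw [ind_neg (fun hc' => by omega), ind_neg (fun hc' => by omega),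
                ind_neg (fun hc' => by omega)]
              try decide
        · have hvp : ¬ (v.1 = p + 1) := by omega
          rw [ind_neg (fun hc' => hup hc'.2.1), ind_neg (fun hc' => hup hc'.1),
            ind_neg (fun hc' => hvp hc'.1)]
          try decide
    have tel : esum (fun u v => cross (p, q) u v + cross (p+1, q) u v + X u v) G
        = g (G.head hGne) + g (G.getLast hGne) := by
      apply esum_telescope
      exact List.IsChain.imp (fun a b hab => per a b hab) hGc
    have hge1 : g (G.head hGne) = 0 := by
      rw [hGhead]
      apply ind_neg; rintro ⟨ha, -⟩
      simp only [he1] at ha; omega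
    have hge4 : g (G.getLast hGne) = 0 := by
      rw [hGlast]
      apply ind_neg; rintro ⟨ha, -⟩
      simp only [he4] at ha; omega
    have hXz : esum X G = 0 := by
      apply esum_zero'
      refine List.IsChain.imp ?_ (chain'_mem hGc)
      rintro a b ⟨hA, ha, hb⟩
      exact ind_neg (fun hc => hST _ (cellS' (p+1) q a b ha hb hc.1 hc.2.1 hc.2.2
        (by omega) (by omega)) hT')
    have split : esum (fun u v => cross (p, q) u v + cross (p+1, q) u v + X u v) G
        = esum (cross (p,q)) G + esum (cross (p+1,q)) G + esum X G := by
      rw [esum_add (fun u v => cross (p, q) u v + cross (p+1, q) u v) X G,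
        esum_add (cross (p,q)) (cross (p+1,q)) G]
    have : esum (cross (p,q)) G + esum (cross (p+1,q)) G = 0 := by
      have := tel
      rw [split, hXz, add_zero, hge1, hge4, add_zero] at this
      exact this
    exact z2 _ _ this
  -- invariance along any T-step
  have stepAdj : ∀ t t' : ℤ×ℤ, t ∈ T → t' ∈ T → Adj t t' → Wf t = Wf t' := by
    intro t t' ht ht' hA
    obtain ⟨p, q⟩ := t
    obtain ⟨p', q'⟩ := t'
    rcases hA with ⟨h2, hd | hd⟩ | ⟨h1, hd | hd⟩
    · simp only at h2 hd
      have : (p', q') = (p+1, q) := by rw [hd, h2]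
      rw [this] at ht' ⊢
      exact stepH p q ht ht'
    · simp only at h2 hd
      have : (p, q) = (p'+1, q') := by rw [hd, h2]
      rw [this] at ht ⊢
      exact (stepH p' q' ht' ht).symm
    · simp only at h1 hd
      have : (p', q') = (p, q+1) := by rw [hd, h1]
      rw [this] at ht' ⊢
      exact stepV p q ht' (hTr _ ht).1 (by have := (hTr _ ht).2.1; omega)
    · simp only at h1 hd
      have : (p, q) = (p', q'+1) := by rw [hd, h1]
      rw [this] at ht ⊢
      exact (stepV p' q' ht (hTr _ ht').1 (by have := (hTr _ ht').2.1; omega)).symm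
  -- value at the start of τ
  have hWhead : Wf (τ.head hτne) = 0 := by
    set t₀ := τ.head hτne with ht₀
    have ht₀T : t₀ ∈ T := hτT _ (List.head_mem hτne)
    have ht₀r := hTr _ ht₀T
    simp only [hWf]
    apply esum_zero'
    refine List.IsChain.imp ?_ (chain'_mem hGc)
    rintro a b ⟨hA, ha, hb⟩
    apply ind_neg
    rintro ⟨h2, hle, hmin⟩
    have hrow := rowG a ha
    have ha2 : a.2 = 0 := by rw [hτh] at hle; omega
    have : (t₀.1, (0:ℤ)) ∈ S :=
      cellS t₀.1 0 a b ha hb h2 ha2 hmin (by omega) (by omega)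
    have heq : (t₀.1, (0:ℤ)) = t₀ := by
      rw [← hτh]
    exact hST _ this (heq ▸ ht₀T)
  -- value at the end of τ
  have hWlast : Wf (τ.getLast hτne) = 1 := by
    set t₁ := τ.getLast hτne with ht₁
    have ht₁T : t₁ ∈ T := hτT _ (List.getLast_mem hτne)
    have ht₁r := hTr _ ht₁T
    set g : ℤ×ℤ → ZMod 2 := fun w => ind (w.1 ≤ t₁.1) with hg
    have per : ∀ u v : ℤ×ℤ, Adj u v → u ∈ G → v ∈ G → cross t₁ u v = g u + g v := by
      intro u v hA hu hv
      have hru := rowG u hu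
      rcases hA with ⟨h2, hd⟩ | ⟨h1', hd⟩
      · -- horizontal
        have hle : u.2 ≤ t₁.2 := by rw [hτl]; omega
        simp only [cross, hg]
        rcases hd with hd | hd
        · have hmin : min u.1 v.1 = u.1 := by omega
          rcases lt_trichotomy u.1 t₁.1 with hc | hc | hc
          · rw [ind_neg (fun hc' => by omega), ind_pos (by omega : u.1 ≤ t₁.1),
              ind_pos (by omega : v.1 ≤ t₁.1)]
            try decide
          · rw [ind_pos ⟨h2, hle, by omega⟩, ind_pos (by omega : u.1 ≤ t₁.1),
              ind_neg (fun hc' => by omega)]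
            try decide
          · rw [ind_neg (fun hc' => by omega), ind_neg (fun hc' => by omega),
              ind_neg (fun hc' => by omega)]
            try decide
        · have hmin : min u.1 v.1 = v.1 := by omega
          rcases lt_trichotomy v.1 t₁.1 with hc | hc | hc
          · rw [ind_neg (fun hc' => by omega), ind_pos (by omega : u.1 ≤ t₁.1),
              ind_pos (by omega : v.1 ≤ t₁.1)]
            try decide
          · rw [ind_pos ⟨h2, hle, by omega⟩, ind_neg (fun hc' => by omega),
              ind_pos (by omega : v.1 ≤ t₁.1)]
            try decide
          · rw [ind_neg (fun hc' => by omega), ind_neg (fun hc' => by omega),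
              ind_neg (fun hc' => by omega)]
            try decide
      · -- vertical
        simp only [cross, hg]
        rw [ind_neg (fun hc' => by rcases hd with hd|hd <;> omega)]
        have : u.1 = v.1 := h1'
        by_cases hc : u.1 ≤ t₁.1
        · rw [ind_pos hc, ind_pos (by omega : v.1 ≤ t₁.1)]
          try decide
        · rw [ind_neg hc, ind_neg (fun hc' => by omega)]
          try decide
    have tel : esum (cross t₁) G = g (G.head hGne) + g (G.getLast hGne) := by
      apply esum_telescope
      refine List.IsChain.imp ?_ (chain'_mem hGc)
      rintro a b ⟨hA, ha, hb⟩
      exact per a b hA ha hb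
    have hge1 : g (G.head hGne) = 1 := by
      rw [hGhead]
      apply ind_pos
      show e1.1 ≤ t₁.1
      simp only [he1]; omega
    have hge4 : g (G.getLast hGne) = 0 := by
      rw [hGlast]
      apply ind_neg
      show ¬ (e4.1 ≤ t₁.1)
      simp only [he4]; omega
    simp only [hWf]
    rw [tel, hge1, hge4, add_zero]
  -- Wf is constant along τ
  have const : ∀ (l : List (ℤ×ℤ)) (hne : l ≠ []), List.Chain' Adj l → (∀ c ∈ l, c ∈ T) →
      Wf (l.head hne) = Wf (l.getLast hne) := by
    intro l
    induction l with
    | nil => intro hne; exact absurd rfl hne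
    | cons t l ih =>
      intro hne hc hm
      cases l with
      | nil => rfl
      | cons t' l' =>
        unfold List.Chain' at hc
        rw [List.isChain_cons_cons] at hc
        have h1 : Wf t = Wf t' := stepAdj t t' (hm _ (by simp)) (hm _ (by simp)) hc.1
        have h2 := ih (by simp) hc.2 (fun c hcm => hm c (by simp [hcm]))
        rw [List.getLast_cons (by simp : (t' :: l') ≠ [])]
        exact h1.trans h2
  have hfinal := const τ hτne hτc hτT
  rw [hWhead, hWlast] at hfinal
  exact absurd hfinal (by decide)


/-! ### From continua in a rectangle to the grid -/

lemma rtg_of_steps {α : Type*} {r r' : α → α → Prop}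
    (H : ∀ a b, r a b → Relation.ReflTransGen r' a b) {x y : α}
    (h : Relation.ReflTransGen r x y) : Relation.ReflTransGen r' x y := by
  induction h with
  | refl => exact Relation.ReflTransGen.refl
  | tail _ h2 ih => exact ih.trans (H _ _ h2)

lemma exists_walk {r : ℤ×ℤ → ℤ×ℤ → Prop} {S : Set (ℤ×ℤ)}
    (hr : ∀ a b, r a b → Adj a b ∧ a ∈ S ∧ b ∈ S) {x y : ℤ×ℤ} (hy : y ∈ S)
    (h : Relation.ReflTransGen r x y) :
    ∃ (l : List (ℤ×ℤ)) (hne : l ≠ []), l.head hne = x ∧ l.getLast hne = y ∧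
      List.Chain' Adj l ∧ ∀ c ∈ l, c ∈ S := by
  induction h using Relation.ReflTransGen.head_induction_on with
  | refl =>
    exact ⟨[y], by simp, rfl, rfl, List.isChain_singleton _, by simpa using hy⟩
  | head hab _ ih =>
    obtain ⟨l, hne, hhead, hlast, hchain, hmem⟩ := ih
    rename_i a b _
    refine ⟨a :: l, by simp, rfl, ?_, ?_, ?_⟩
    · rw [List.getLast_cons hne]; exact hlast
    · refine List.IsChain.cons hchain ?_
      intro z hz
      rw [List.head?_eq_head hne] at hz
      simp only [Option.mem_some_iff] at hz
      subst hz
      rw [hhead]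
      exact (hr _ _ hab).1
    · intro c hc
      rcases List.mem_cons.mp hc with h | h
      · subst h; exact (hr _ _ hab).2.1
      · exact hmem c h

lemma oneDim (a h : ℝ) (M : ℕ) (hh : 0 < h) (hM : 1 ≤ M) (z : ℝ)
    (h0 : a ≤ z) (h1 : z ≤ a + M * h) :
    ∃ i : ℤ, 0 ≤ i ∧ i < M ∧ a + i * h ≤ z ∧ z ≤ a + (i+1) * h := by
  set i0 : ℤ := ⌊(z - a) / h⌋ with hi0
  have hnn : (0:ℝ) ≤ (z - a) / h := div_nonneg (by linarith) hh.le
  have hi00 : 0 ≤ i0 := Int.floor_nonneg.mpr hnn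
  by_cases hc : i0 ≤ (M : ℤ) - 1
  · refine ⟨i0, hi00, by omega, ?_, ?_⟩
    · have hfl : (i0 : ℝ) ≤ (z - a) / h := Int.floor_le _
      have := (le_div_iff₀ hh).mp hfl
      linarith
    · have hlt : (z - a) / h < (i0 : ℝ) + 1 := Int.lt_floor_add_one _
      have := (div_lt_iff₀ hh).mp hlt
      push_cast
      linarith
  · push_neg at hc
    have hMi : ((M : ℝ)) ≤ (i0 : ℝ) := by
      have h' : (M:ℤ) ≤ i0 := by omega
      exact_mod_cast h' 
    have hfl : (i0 : ℝ) ≤ (z - a) / h := Int.floor_le _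
    have hge : (M : ℝ) * h ≤ z - a := (le_div_iff₀ hh).mp (by linarith)
    refine ⟨(M : ℤ) - 1, by omega, by omega, ?_, ?_⟩
    · push_cast
      linarith [hh.le]
    · push_cast
      linarith

def cell (x₁ y₁ hx hy : ℝ) (c : ℤ×ℤ) : Set (ℝ×ℝ) :=
  {z | x₁ + c.1*hx ≤ z.1 ∧ z.1 ≤ x₁ + (c.1+1)*hx ∧ y₁ + c.2*hy ≤ z.2 ∧ z.2 ≤ y₁ + (c.2+1)*hy}

def adj8 (a b : ℤ×ℤ) : Prop := b.1 ≤ a.1 + 1 ∧ a.1 ≤ b.1 + 1 ∧ b.2 ≤ a.2 + 1 ∧ a.2 ≤ b.2 + 1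

lemma cell_closed (x₁ y₁ hx hy : ℝ) (c : ℤ×ℤ) : IsClosed (cell x₁ y₁ hx hy c) := by
  have : cell x₁ y₁ hx hy c
      = {z : ℝ×ℝ | x₁ + c.1*hx ≤ z.1} ∩ ({z | z.1 ≤ x₁ + (c.1+1)*hx}
        ∩ ({z | y₁ + c.2*hy ≤ z.2} ∩ {z | z.2 ≤ y₁ + (c.2+1)*hy})) := by
    ext z; simp only [cell, Set.mem_setOf_eq, Set.mem_inter_iff]
  rw [this]
  exact (isClosed_le continuous_const continuous_fst).inter
    ((isClosed_le continuous_fst continuous_const).inter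
      ((isClosed_le continuous_const continuous_snd).inter
        (isClosed_le continuous_snd continuous_const)))

lemma cells_overlap {x₁ y₁ hx hy : ℝ} (hhx : 0 < hx) (hhy : 0 < hy) {c d : ℤ×ℤ} {z : ℝ×ℝ}
    (hc : z ∈ cell x₁ y₁ hx hy c) (hd : z ∈ cell x₁ y₁ hx hy d) : adj8 c d := by
  obtain ⟨hc1, hc2, hc3, hc4⟩ := hc
  obtain ⟨hd1, hd2, hd3, hd4⟩ := hd
  have k1 : (d.1 : ℝ) ≤ (c.1 : ℝ) + 1 := by
    have := le_trans hd1 hc2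
    have h2 : (d.1 : ℝ) * hx ≤ ((c.1 : ℝ) + 1) * hx := by linarith
    exact le_of_mul_le_mul_right h2 hhx
  have k2 : (c.1 : ℝ) ≤ (d.1 : ℝ) + 1 := by
    have := le_trans hc1 hd2
    have h2 : (c.1 : ℝ) * hx ≤ ((d.1 : ℝ) + 1) * hx := by linarith
    exact le_of_mul_le_mul_right h2 hhx
  have k3 : (d.2 : ℝ) ≤ (c.2 : ℝ) + 1 := by
    have := le_trans hd3 hc4
    have h2 : (d.2 : ℝ) * hy ≤ ((c.2 : ℝ) + 1) * hy := by linarith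
    exact le_of_mul_le_mul_right h2 hhy
  have k4 : (c.2 : ℝ) ≤ (d.2 : ℝ) + 1 := by
    have := le_trans hc3 hd4
    have h2 : (c.2 : ℝ) * hy ≤ ((d.2 : ℝ) + 1) * hy := by linarith
    exact le_of_mul_le_mul_right h2 hhy
  exact ⟨by exact_mod_cast k1, by exact_mod_cast k2, by exact_mod_cast k3, by exact_mod_cast k4⟩

def CXset (x₁ y₁ hx hy : ℝ) (m n : ℕ) (X : Set (ℝ×ℝ)) : Set (ℤ×ℤ) :=
  {c | (0 ≤ c.1 ∧ c.1 < (m:ℤ) ∧ 0 ≤ c.2 ∧ c.2 < (n:ℤ)) ∧ (cell x₁ y₁ hx hy c ∩ X).Nonempty}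

lemma CXset_finite (x₁ y₁ hx hy : ℝ) (m n : ℕ) (X : Set (ℝ×ℝ)) :
    (CXset x₁ y₁ hx hy m n X).Finite := by
  apply Set.Finite.subset (Set.Finite.prod (Set.finite_Icc (0:ℤ) (m-1)) (Set.finite_Icc (0:ℤ) (n-1)))
  rintro c ⟨⟨h1, h2, h3, h4⟩, -⟩
  constructor
  · simp only [Set.mem_Icc]; omega
  · simp only [Set.mem_Icc]; omega

def r8 (CX : Set (ℤ×ℤ)) (a b : ℤ×ℤ) : Prop := a ∈ CX ∧ b ∈ CX ∧ adj8 a b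

lemma conn_cells {x₁ y₁ hx hy : ℝ} (hhx : 0 < hx) (hhy : 0 < hy) {m n : ℕ}
    {X : Set (ℝ×ℝ)} (hXc : IsPreconnected X)
    (hcov : ∀ z ∈ X, ∃ c ∈ CXset x₁ y₁ hx hy m n X, z ∈ cell x₁ y₁ hx hy c)
    {c₀ c₁ : ℤ×ℤ} (hc₀ : c₀ ∈ CXset x₁ y₁ hx hy m n X) (hc₁ : c₁ ∈ CXset x₁ y₁ hx hy m n X) :
    Relation.ReflTransGen (r8 (CXset x₁ y₁ hx hy m n X)) c₀ c₁ := by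
  classical
  by_contra hcon
  set CX := CXset x₁ y₁ hx hy m n X with hCX
  set P : Set (ℤ×ℤ) := {d | d ∈ CX ∧ Relation.ReflTransGen (r8 CX) c₀ d} with hP
  have hfin : CX.Finite := CXset_finite _ _ _ _ _ _ _
  set U₁ : Set (ℝ×ℝ) := ⋃ d ∈ P, cell x₁ y₁ hx hy d with hU₁
  set U₂ : Set (ℝ×ℝ) := ⋃ d ∈ CX \ P, cell x₁ y₁ hx hy d with hU₂
  have hclosed₁ : IsClosed U₁ :=
    Set.Finite.isClosed_biUnion (hfin.subset (fun d hd => hd.1)) (fun i _ => cell_closed _ _ _ _ _)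
  have hclosed₂ : IsClosed U₂ :=
    Set.Finite.isClosed_biUnion (hfin.subset (fun d hd => hd.1)) (fun i _ => cell_closed _ _ _ _ _)
  have hsub : X ⊆ U₁ ∪ U₂ := by
    intro z hz
    obtain ⟨c, hcC, hzc⟩ := hcov z hz
    by_cases hp : c ∈ P
    · exact Or.inl (Set.mem_biUnion hp hzc)
    · exact Or.inr (Set.mem_biUnion ⟨hcC, hp⟩ hzc)
  have h1 : (X ∩ U₁).Nonempty := by
    obtain ⟨w, hw1, hw2⟩ := hc₀.2
    exact ⟨w, hw2, Set.mem_biUnion ⟨hc₀, Relation.ReflTransGen.refl⟩ hw1⟩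
  have h2 : (X ∩ U₂).Nonempty := by
    have hc₁P : c₁ ∉ P := fun hp => hcon hp.2
    obtain ⟨w, hw1, hw2⟩ := hc₁.2
    exact ⟨w, hw2, Set.mem_biUnion ⟨hc₁, hc₁P⟩ hw1⟩
  obtain ⟨z, hzX, hz12⟩ := isPreconnected_closed_iff.mp hXc U₁ U₂ hclosed₁ hclosed₂ hsub h1 h2
  obtain ⟨hz1, hz2⟩ := hz12
  rw [hU₁, Set.mem_iUnion₂] at hz1
  rw [hU₂, Set.mem_iUnion₂] at hz2
  obtain ⟨d, hdP, hzd⟩ := hz1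
  obtain ⟨d', hd'CP, hzd'⟩ := hz2
  have hadj : adj8 d d' := cells_overlap hhx hhy hzd hzd'
  exact hd'CP.2 ⟨hd'CP.1, hdP.2.tail ⟨hdP.1, hd'CP.1, hadj⟩⟩

lemma mem_CXset {x₁ y₁ hx hy : ℝ} {m n : ℕ} {X : Set (ℝ×ℝ)} {i j : ℤ} {z : ℝ×ℝ}
    (h1 : 0 ≤ i) (h2 : i < (m:ℤ)) (h3 : 0 ≤ j) (h4 : j < (n:ℤ))
    (hz : z ∈ X) (c1 : x₁ + i*hx ≤ z.1) (c2 : z.1 ≤ x₁ + (i+1)*hx)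
    (c3 : y₁ + j*hy ≤ z.2) (c4 : z.2 ≤ y₁ + (j+1)*hy) :
    (i, j) ∈ CXset x₁ y₁ hx hy m n X :=
  ⟨⟨h1, h2, h3, h4⟩, ⟨z, ⟨c1, c2, c3, c4⟩, hz⟩⟩

lemma adj8_refl (c : ℤ×ℤ) : adj8 c c := by unfold adj8; omega

theorem crossing_lemma (x₁ x₂ y₁ y₂ : ℝ) (hx12 : x₁ < x₂) (hy12 : y₁ < y₂)
    (A B : Set (ℝ×ℝ)) (hAcomp : IsCompact A) (hBcomp : IsCompact B)
    (hAconn : IsPreconnected A) (hBconn : IsPreconnected B)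
    (hAB : ∀ z ∈ A, z ∉ B)
    (hAsub : ∀ z ∈ A, x₁ ≤ z.1 ∧ z.1 ≤ x₂ ∧ y₁ ≤ z.2 ∧ z.2 ≤ y₂)
    (hBsub : ∀ z ∈ B, x₁ ≤ z.1 ∧ z.1 ≤ x₂ ∧ y₁ ≤ z.2 ∧ z.2 ≤ y₂)
    (zl zr zb zt : ℝ×ℝ) (hzl : zl ∈ A) (hzl1 : zl.1 = x₁) (hzr : zr ∈ A) (hzr1 : zr.1 = x₂)
    (hzb : zb ∈ B) (hzb2 : zb.2 = y₁) (hzt : zt ∈ B) (hzt2 : zt.2 = y₂) : False := by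
  classical
  -- a positive gap between A and B
  have hABprod : IsCompact (A ×ˢ B) := hAcomp.prod hBcomp
  have hnepr : (A ×ˢ B).Nonempty := ⟨(zl, zb), ⟨hzl, hzb⟩⟩
  obtain ⟨w0, hw0, hmin⟩ := hABprod.exists_isMinOn hnepr
    (continuous_dist.continuousOn : ContinuousOn (fun w : (ℝ×ℝ)×(ℝ×ℝ) => dist w.1 w.2) _)
  set δ := dist w0.1 w0.2 with hδdef
  have hδpos : 0 < δ := by
    rw [hδdef, dist_pos]
    intro heq
    exact hAB w0.1 hw0.1 (heq ▸ hw0.2)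
  have hδ : ∀ p ∈ A, ∀ q ∈ B, δ ≤ dist p q := by
    intro p hp q hq
    exact isMinOn_iff.mp hmin (p, q) ⟨hp, hq⟩
  -- grid dimensions
  set m : ℕ := ⌈(x₂ - x₁) / (δ/4)⌉₊ with hmdef
  set n : ℕ := ⌈(y₂ - y₁) / (δ/4)⌉₊ with hndef
  have hm1 : 1 ≤ m := Nat.ceil_pos.mpr (div_pos (by linarith) (by linarith))
  have hn1 : 1 ≤ n := Nat.ceil_pos.mpr (div_pos (by linarith) (by linarith))
  have hmZ : (1:ℤ) ≤ (m:ℤ) := by exact_mod_cast hm1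
  have hnZ : (1:ℤ) ≤ (n:ℤ) := by exact_mod_cast hn1
  have hmR : (0:ℝ) < m := by exact_mod_cast hm1
  have hnR : (0:ℝ) < n := by exact_mod_cast hn1
  set hx := (x₂ - x₁)/m with hhxdef
  set hy := (y₂ - y₁)/n with hhydef
  have hhx : 0 < hx := div_pos (by linarith) hmR
  have hhy : 0 < hy := div_pos (by linarith) hnR
  have hxle : hx ≤ δ/4 := by
    have hceil : (x₂ - x₁) / (δ/4) ≤ (m:ℝ) := Nat.le_ceil _
    have h2 : x₂ - x₁ ≤ (m:ℝ) * (δ/4) := (div_le_iff₀ (by linarith)).mp hceil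
    rw [hhxdef, div_le_iff₀ hmR]
    linarith
  have hyle : hy ≤ δ/4 := by
    have hceil : (y₂ - y₁) / (δ/4) ≤ (n:ℝ) := Nat.le_ceil _
    have h2 : y₂ - y₁ ≤ (n:ℝ) * (δ/4) := (div_le_iff₀ (by linarith)).mp hceil
    rw [hhydef, div_le_iff₀ hnR]
    linarith
  have hxtop : x₁ + m * hx = x₂ := by
    rw [hhxdef]
    field_simp
    ring
  have hytop : y₁ + n * hy = y₂ := by
    rw [hhydef]
    field_simp
    ring
  -- covering lemmas
  have hcovA : ∀ z ∈ A, ∃ c ∈ CXset x₁ y₁ hx hy m n A, z ∈ cell x₁ y₁ hx hy c := by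
    intro z hz
    obtain ⟨b1, b2, b3, b4⟩ := hAsub z hz
    obtain ⟨i, hi0, him, hia, hib⟩ := oneDim x₁ hx m hhx hm1 z.1 b1 (by rw [hxtop]; exact b2)
    obtain ⟨j, hj0, hjn, hja, hjb⟩ := oneDim y₁ hy n hhy hn1 z.2 b3 (by rw [hytop]; exact b4)
    refine ⟨(i, j), ⟨⟨hi0, him, hj0, hjn⟩, ⟨z, ⟨hia, hib, hja, hjb⟩, hz⟩⟩, ⟨hia, hib, hja, hjb⟩⟩
  have hcovB : ∀ z ∈ B, ∃ c ∈ CXset x₁ y₁ hx hy m n B, z ∈ cell x₁ y₁ hx hy c := by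
    intro z hz
    obtain ⟨b1, b2, b3, b4⟩ := hBsub z hz
    obtain ⟨i, hi0, him, hia, hib⟩ := oneDim x₁ hx m hhx hm1 z.1 b1 (by rw [hxtop]; exact b2)
    obtain ⟨j, hj0, hjn, hja, hjb⟩ := oneDim y₁ hy n hhy hn1 z.2 b3 (by rw [hytop]; exact b4)
    refine ⟨(i, j), ⟨⟨hi0, him, hj0, hjn⟩, ⟨z, ⟨hia, hib, hja, hjb⟩, hz⟩⟩, ⟨hia, hib, hja, hjb⟩⟩
  -- dilated cell families
  set SA : Set (ℤ×ℤ) := {c | (0 ≤ c.1 ∧ c.1 < (m:ℤ) ∧ 0 ≤ c.2 ∧ c.2 < (n:ℤ)) ∧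
    ∃ d ∈ CXset x₁ y₁ hx hy m n A, adj8 c d} with hSA
  set SB : Set (ℤ×ℤ) := {c | (0 ≤ c.1 ∧ c.1 < (m:ℤ) ∧ 0 ≤ c.2 ∧ c.2 < (n:ℤ)) ∧
    ∃ d ∈ CXset x₁ y₁ hx hy m n B, adj8 c d} with hSB
  have hCAsub : CXset x₁ y₁ hx hy m n A ⊆ SA := fun c hc => ⟨hc.1, c, hc, adj8_refl c⟩
  have hCBsub : CXset x₁ y₁ hx hy m n B ⊆ SB := fun c hc => ⟨hc.1, c, hc, adj8_refl c⟩
  -- SA and SB are disjoint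
  have hST : ∀ c, c ∈ SA → c ∉ SB := by
    rintro c ⟨-, dA, hdA, hadjA⟩ ⟨-, dB, hdB, hadjB⟩
    obtain ⟨pA, hpAc, hpAA⟩ := hdA.2
    obtain ⟨pB, hpBc, hpBB⟩ := hdB.2
    obtain ⟨a1, a2, a3, a4⟩ := hpAc
    obtain ⟨b1', b2', b3', b4'⟩ := hpBc
    -- coordinate bounds via the common cell c
    have hdA1 : ((dA.1 : ℝ)) ≤ (c.1 : ℝ) + 1 := by exact_mod_cast hadjA.1
    have hdA1' : ((c.1 : ℝ)) ≤ (dA.1 : ℝ) + 1 := by exact_mod_cast hadjA.2.1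
    have hdA2 : ((dA.2 : ℝ)) ≤ (c.2 : ℝ) + 1 := by exact_mod_cast hadjA.2.2.1
    have hdA2' : ((c.2 : ℝ)) ≤ (dA.2 : ℝ) + 1 := by exact_mod_cast hadjA.2.2.2
    have hdB1 : ((dB.1 : ℝ)) ≤ (c.1 : ℝ) + 1 := by exact_mod_cast hadjB.1
    have hdB1' : ((c.1 : ℝ)) ≤ (dB.1 : ℝ) + 1 := by exact_mod_cast hadjB.2.1
    have hdB2 : ((dB.2 : ℝ)) ≤ (c.2 : ℝ) + 1 := by exact_mod_cast hadjB.2.2.1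
    have hdB2' : ((c.2 : ℝ)) ≤ (dB.2 : ℝ) + 1 := by exact_mod_cast hadjB.2.2.2
    have eA2 : pA.1 ≤ x₁ + ((c.1:ℝ)+2)*hx := by
      have := mul_le_mul_of_nonneg_right (by linarith : (dA.1:ℝ)+1 ≤ (c.1:ℝ)+2) hhx.le
      linarith
    have eA1 : x₁ + ((c.1:ℝ)-1)*hx ≤ pA.1 := by
      have := mul_le_mul_of_nonneg_right (by linarith : (c.1:ℝ)-1 ≤ (dA.1:ℝ)) hhx.le
      linarith
    have eB2 : pB.1 ≤ x₁ + ((c.1:ℝ)+2)*hx := by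
      have := mul_le_mul_of_nonneg_right (by linarith : (dB.1:ℝ)+1 ≤ (c.1:ℝ)+2) hhx.le
      linarith
    have eB1 : x₁ + ((c.1:ℝ)-1)*hx ≤ pB.1 := by
      have := mul_le_mul_of_nonneg_right (by linarith : (c.1:ℝ)-1 ≤ (dB.1:ℝ)) hhx.le
      linarith
    have fA2 : pA.2 ≤ y₁ + ((c.2:ℝ)+2)*hy := by
      have := mul_le_mul_of_nonneg_right (by linarith : (dA.2:ℝ)+1 ≤ (c.2:ℝ)+2) hhy.le
      linarith
    have fA1 : y₁ + ((c.2:ℝ)-1)*hy ≤ pA.2 := by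
      have := mul_le_mul_of_nonneg_right (by linarith : (c.2:ℝ)-1 ≤ (dA.2:ℝ)) hhy.le
      linarith
    have fB2 : pB.2 ≤ y₁ + ((c.2:ℝ)+2)*hy := by
      have := mul_le_mul_of_nonneg_right (by linarith : (dB.2:ℝ)+1 ≤ (c.2:ℝ)+2) hhy.le
      linarith
    have fB1 : y₁ + ((c.2:ℝ)-1)*hy ≤ pB.2 := by
      have := mul_le_mul_of_nonneg_right (by linarith : (c.2:ℝ)-1 ≤ (dB.2:ℝ)) hhy.le
      linarith
    have hd1 : dist pA.1 pB.1 ≤ 3 * hx := by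
      rw [Real.dist_eq, abs_le]
      constructor <;> nlinarith [eA1, eA2, eB1, eB2]
    have hd2 : dist pA.2 pB.2 ≤ 3 * hy := by
      rw [Real.dist_eq, abs_le]
      constructor <;> nlinarith [fA1, fA2, fB1, fB2]
    have : dist pA pB ≤ 3 * (δ/4) := by
      rw [Prod.dist_eq]
      apply max_le (by linarith) (by linarith)
    have := hδ pA hpAA pB hpBB
    linarith
  have hSTsym : ∀ c, c ∈ SB → c ∉ SA := fun c hc hc' => hST c hc' hc
  -- endpoint cells
  obtain ⟨jl, hjl0, hjln, hjla, hjlb⟩ := oneDim y₁ hy n hhy hn1 zl.2 (hAsub zl hzl).2.2.1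
    (by rw [hytop]; exact (hAsub zl hzl).2.2.2)
  obtain ⟨jr, hjr0, hjrn, hjra, hjrb⟩ := oneDim y₁ hy n hhy hn1 zr.2 (hAsub zr hzr).2.2.1
    (by rw [hytop]; exact (hAsub zr hzr).2.2.2)
  obtain ⟨ib, hib0, hibm, hiba, hibb⟩ := oneDim x₁ hx m hhx hm1 zb.1 (hBsub zb hzb).1
    (by rw [hxtop]; exact (hBsub zb hzb).2.1)
  obtain ⟨it, hit0, hitm, hita, hitb⟩ := oneDim x₁ hx m hhx hm1 zt.1 (hBsub zt hzt).1
    (by rw [hxtop]; exact (hBsub zt hzt).2.1)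
  set cL : ℤ×ℤ := (0, jl) with hcL
  set cR : ℤ×ℤ := ((m:ℤ) - 1, jr) with hcR
  set cB : ℤ×ℤ := (ib, 0) with hcB
  set cT : ℤ×ℤ := (it, (n:ℤ) - 1) with hcT
  have hcLC : cL ∈ CXset x₁ y₁ hx hy m n A := by
    rw [hcL]
    refine mem_CXset (le_refl 0) (by omega) hjl0 hjln hzl ?_ ?_ hjla hjlb
    · rw [hzl1]; push_cast; linarith
    · rw [hzl1]; push_cast; linarith [hhx.le]
  have hcRC : cR ∈ CXset x₁ y₁ hx hy m n A := by
    rw [hcR]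
    refine mem_CXset (by omega) (by omega) hjr0 hjrn hzr ?_ ?_ hjra hjrb
    · rw [hzr1, ← hxtop]; push_cast; linarith [hhx.le]
    · rw [hzr1, ← hxtop]; push_cast; linarith
  have hcBC : cB ∈ CXset x₁ y₁ hx hy m n B := by
    rw [hcB]
    refine mem_CXset hib0 hibm (le_refl 0) (by omega) hzb hiba hibb ?_ ?_
    · rw [hzb2]; push_cast; linarith
    · rw [hzb2]; push_cast; linarith [hhy.le]
  have hcTC : cT ∈ CXset x₁ y₁ hx hy m n B := by
    rw [hcT]
    refine mem_CXset hit0 hitm (by omega) (by omega) hzt hita hitb ?_ ?_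
    · rw [hzt2, ← hytop]; push_cast; linarith [hhy.le]
    · rw [hzt2, ← hytop]; push_cast; linarith
  -- convert 8-walks to 4-walks in the dilated families
  have step8to4 : ∀ (X : Set (ℝ×ℝ)) (SX : Set (ℤ×ℤ)),
      (SX = {c | (0 ≤ c.1 ∧ c.1 < (m:ℤ) ∧ 0 ≤ c.2 ∧ c.2 < (n:ℤ)) ∧
        ∃ d ∈ CXset x₁ y₁ hx hy m n X, adj8 c d}) →
      ∀ a b, r8 (CXset x₁ y₁ hx hy m n X) a b →
      Relation.ReflTransGen (fun u v => Adj u v ∧ u ∈ SX ∧ v ∈ SX) a b := by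
    intro X SX hSXdef a b hr
    obtain ⟨haC, hbC, hadj⟩ := hr
    have haS : a ∈ SX := by rw [hSXdef]; exact ⟨haC.1, a, haC, adj8_refl a⟩
    have hbS : b ∈ SX := by rw [hSXdef]; exact ⟨hbC.1, b, hbC, adj8_refl b⟩
    set mid : ℤ×ℤ := (b.1, a.2) with hmid
    have hmidS : mid ∈ SX := by
      rw [hSXdef]
      refine ⟨⟨hbC.1.1, hbC.1.2.1, haC.1.2.2.1, haC.1.2.2.2⟩, b, hbC, ?_⟩
      unfold adj8 at hadj ⊢
      simp only [hmid]
      omega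
    have leg1 : Relation.ReflTransGen (fun u v => Adj u v ∧ u ∈ SX ∧ v ∈ SX) a mid := by
      rcases eq_or_ne a.1 b.1 with heq | hne
      · have : mid = a := by rw [hmid, ← heq]
        rw [this]
      · refine Relation.ReflTransGen.single ⟨?_, haS, hmidS⟩
        left
        refine ⟨rfl, ?_⟩
        unfold adj8 at hadj
        simp only [hmid]
        omega
    have leg2 : Relation.ReflTransGen (fun u v => Adj u v ∧ u ∈ SX ∧ v ∈ SX) mid b := by
      rcases eq_or_ne a.2 b.2 with heq | hne
      · have : mid = b := by rw [hmid, heq]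
        rw [this]
      · refine Relation.ReflTransGen.single ⟨?_, hmidS, hbS⟩
        right
        refine ⟨rfl, ?_⟩
        unfold adj8 at hadj
        simp only [hmid]
        omega
    exact leg1.trans leg2
  -- the two walks
  obtain ⟨γ, hγne, hγhead, hγlast, hγchain, hγmem⟩ :=
    exists_walk (r := fun u v => Adj u v ∧ u ∈ SA ∧ v ∈ SA) (S := SA) (fun a b h => h)
      (hCAsub hcRC)
      (rtg_of_steps (step8to4 A SA hSA) (conn_cells hhx hhy hAconn hcovA hcLC hcRC))
  obtain ⟨τ, hτne, hτhead, hτlast, hτchain, hτmem⟩ :=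
    exists_walk (r := fun u v => Adj u v ∧ u ∈ SB ∧ v ∈ SB) (S := SB) (fun a b h => h)
      (hCBsub hcTC)
      (rtg_of_steps (step8to4 B SB hSB) (conn_cells hhx hhy hBconn hcovB hcBC hcTC))
  -- feed the discrete crossing theorem
  refine discrete_crossing (m:ℤ) (n:ℤ) SA SB hST
    (fun c hc => ⟨hc.1.1, hc.1.2.1, hc.1.2.2.1, hc.1.2.2.2⟩)
    (fun c hc => ⟨hc.1.1, hc.1.2.1, hc.1.2.2.1, hc.1.2.2.2⟩)
    γ hγne hγchain hγmem ?_ ?_ τ hτne hτchain hτmem ?_ ?_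
  · rw [hγhead, hcL]
  · rw [hγlast, hcR]
  · rw [hτhead, hcB]
  · rw [hτlast, hcT]


theorem hopf_main (K : Set (ℝ × ℝ)) (hne : K.Nonempty) (hcomp : IsCompact K)
    (hconn : IsConnected K) (a b : ℝ) (ha0 : 0 < a) (hb0 : 0 < b)
    (haK : ∀ p ∈ K, p + (a, 0) ∉ K) (hbK : ∀ p ∈ K, p + (b, 0) ∉ K)
    (p : ℝ × ℝ) (hp : p ∈ K) (hpc : p + (a + b, 0) ∈ K) : False := by
  classical
  set c := a + b with hc
  have hKpre : IsPreconnected K := hconn.isPreconnected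
  -- translates
  set M : Set (ℝ×ℝ) := (fun z => z + ((a:ℝ), (0:ℝ))) '' K with hM
  set K2 : Set (ℝ×ℝ) := (fun z => z + ((c:ℝ), (0:ℝ))) '' K with hK2
  set C : Set (ℝ×ℝ) := K ∪ K2 with hCdef
  have hMcomp : IsCompact M := hcomp.image (continuous_add_right _)
  have hK2comp : IsCompact K2 := hcomp.image (continuous_add_right _)
  have hMpre : IsPreconnected M := hKpre.image _ (continuous_add_right _).continuousOn
  have hK2pre : IsPreconnected K2 := hKpre.image _ (continuous_add_right _).continuousOn
  have hCcomp : IsCompact C := hcomp.union hK2comp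
  have hq2 : p + (c, 0) ∈ K2 := ⟨p, hp, rfl⟩
  have hCpre : IsPreconnected C := by
    refine IsPreconnected.union (p + (c, 0)) hpc hq2 hKpre hK2pre
  -- C and M are disjoint
  have hCM : ∀ z ∈ C, z ∉ M := by
    rintro z hz ⟨k, hk, hek⟩
    have hekk : k + (a, 0) = z := hek
    rcases hz with hz | ⟨k2, hk2, hek2⟩
    · exact haK k hk (hekk ▸ hz)
    · -- k + (a,0) = k2 + (c,0)  ⇒  k2 + (b,0) = k ∈ K
      apply hbK k2 hk2
      have hekk2 : k2 + (c, 0) = z := hek2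
      have h1 : k2.1 + c = k.1 + a := by
        have := congrArg Prod.fst (hekk2.trans hekk.symm)
        simpa using this
      have h2 : k2.2 = k.2 := by
        have := congrArg Prod.snd (hekk2.trans hekk.symm)
        simpa using this
      have heq : k2 + (b, 0) = k := by
        apply Prod.ext
        · show k2.1 + b = k.1
          rw [hc] at h1
          linarith
        · show k2.2 + 0 = k.2
          rw [h2]; ring
      rw [heq]
      exact hk
  -- extremal points of K
  obtain ⟨tK, htK, htKmax'⟩ := hcomp.exists_isMaxOn hne continuous_snd.continuousOn
  obtain ⟨bK, hbKm, hbKmin'⟩ := hcomp.exists_isMinOn hne continuous_snd.continuousOn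
  obtain ⟨lK, hlK, hlKmin'⟩ := hcomp.exists_isMinOn hne continuous_fst.continuousOn
  obtain ⟨rK, hrK, hrKmax'⟩ := hcomp.exists_isMaxOn hne continuous_fst.continuousOn
  have htKmax : ∀ z ∈ K, z.2 ≤ tK.2 := fun z hz => htKmax' hz
  have hbKmin : ∀ z ∈ K, bK.2 ≤ z.2 := fun z hz => hbKmin' hz
  have hlKmin : ∀ z ∈ K, lK.1 ≤ z.1 := fun z hz => hlKmin' hz
  have hrKmax : ∀ z ∈ K, z.1 ≤ rK.1 := fun z hz => hrKmax' hz
  -- the rectangle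
  set x₁ := lK.1 - 1 with hx₁
  set x₂ := rK.1 + c + 1 with hx₂
  set y₁ := bK.2 - 1 with hy₁
  set y₂ := tK.2 + 1 with hy₂
  have hlr : lK.1 ≤ rK.1 := hrKmax _ hlK
  have hbt : bK.2 ≤ tK.2 := htKmax _ hbKm
  have hx12 : x₁ < x₂ := by rw [hx₁, hx₂, hc]; linarith
  have hy12 : y₁ < y₂ := by rw [hy₁, hy₂]; linarith
  -- bounds of C and M
  have hCsub : ∀ z ∈ C, lK.1 ≤ z.1 ∧ z.1 ≤ rK.1 + c ∧ bK.2 ≤ z.2 ∧ z.2 ≤ tK.2 := by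
    rintro z (hz | ⟨k, hk, hek⟩)
    · exact ⟨hlKmin z hz, le_trans (hrKmax z hz) (by linarith), hbKmin z hz, htKmax z hz⟩
    · rw [← hek]
      simp only [Prod.fst_add, Prod.snd_add]
      refine ⟨by have := hlKmin k hk; simp; linarith, by have := hrKmax k hk; simp; linarith,
        by have := hbKmin k hk; simpa using this, by have := htKmax k hk; simpa using this⟩
  have hMsub : ∀ z ∈ M, lK.1 + a ≤ z.1 ∧ z.1 ≤ rK.1 + a ∧ bK.2 ≤ z.2 ∧ z.2 ≤ tK.2 := by
    rintro z ⟨k, hk, hek⟩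
    rw [← hek]
    simp only [Prod.fst_add, Prod.snd_add]
    refine ⟨by have := hlKmin k hk; simp; linarith, by have := hrKmax k hk; simp; linarith,
      by have := hbKmin k hk; simpa using this, by have := htKmax k hk; simpa using this⟩
  -- segments
  set SgL : Set (ℝ×ℝ) := {z | x₁ ≤ z.1 ∧ z.1 ≤ lK.1 ∧ z.2 = lK.2} with hSgL
  set SgR : Set (ℝ×ℝ) := {z | rK.1 + c ≤ z.1 ∧ z.1 ≤ x₂ ∧ z.2 = rK.2} with hSgR
  set SgU : Set (ℝ×ℝ) := {z | z.1 = tK.1 + a ∧ tK.2 ≤ z.2 ∧ z.2 ≤ y₂} with hSgU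
  set SgD : Set (ℝ×ℝ) := {z | z.1 = bK.1 + a ∧ y₁ ≤ z.2 ∧ z.2 ≤ bK.2} with hSgD
  have hSgLeq : SgL = Set.Icc x₁ lK.1 ×ˢ ({lK.2} : Set ℝ) := by
    ext z
    simp only [hSgL, Set.mem_setOf_eq, Set.mem_prod, Set.mem_Icc, Set.mem_singleton_iff]
    tauto
  have hSgReq : SgR = Set.Icc (rK.1 + c) x₂ ×ˢ ({rK.2} : Set ℝ) := by
    ext z
    simp only [hSgR, Set.mem_setOf_eq, Set.mem_prod, Set.mem_Icc, Set.mem_singleton_iff]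
    tauto
  have hSgUeq : SgU = ({tK.1 + a} : Set ℝ) ×ˢ Set.Icc tK.2 y₂ := by
    ext z
    simp only [hSgU, Set.mem_setOf_eq, Set.mem_prod, Set.mem_Icc, Set.mem_singleton_iff]
    try tauto
  have hSgDeq : SgD = ({bK.1 + a} : Set ℝ) ×ˢ Set.Icc y₁ bK.2 := by
    ext z
    simp only [hSgD, Set.mem_setOf_eq, Set.mem_prod, Set.mem_Icc, Set.mem_singleton_iff]
    try tauto
  have hSgLcomp : IsCompact SgL := by rw [hSgLeq]; exact isCompact_Icc.prod isCompact_singleton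
  have hSgRcomp : IsCompact SgR := by rw [hSgReq]; exact isCompact_Icc.prod isCompact_singleton
  have hSgUcomp : IsCompact SgU := by rw [hSgUeq]; exact isCompact_singleton.prod isCompact_Icc
  have hSgDcomp : IsCompact SgD := by rw [hSgDeq]; exact isCompact_singleton.prod isCompact_Icc
  have hSgLpre : IsPreconnected SgL := by
    rw [hSgLeq]; exact ((convex_Icc _ _).prod (convex_singleton _)).isPreconnected
  have hSgRpre : IsPreconnected SgR := by
    rw [hSgReq]; exact ((convex_Icc _ _).prod (convex_singleton _)).isPreconnected
  have hSgUpre : IsPreconnected SgU := by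
    rw [hSgUeq]; exact ((convex_singleton _).prod (convex_Icc _ _)).isPreconnected
  have hSgDpre : IsPreconnected SgD := by
    rw [hSgDeq]; exact ((convex_singleton _).prod (convex_Icc _ _)).isPreconnected
  -- the two spanning compacta
  set A : Set (ℝ×ℝ) := (C ∪ SgL) ∪ SgR with hA
  set B : Set (ℝ×ℝ) := (M ∪ SgU) ∪ SgD with hB
  have hlKC : lK ∈ C := Or.inl hlK
  have hlKL : lK ∈ SgL := ⟨by rw [hx₁]; linarith, le_refl _, rfl⟩
  have hrc2 : rK + (c, 0) ∈ C := Or.inr ⟨rK, hrK, rfl⟩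
  have hrcR : rK + (c, 0) ∈ SgR :=
    ⟨le_refl _, by show rK.1 + c ≤ x₂; rw [hx₂]; linarith, by show rK.2 + 0 = rK.2; ring⟩
  have hAcomp : IsCompact A := (hCcomp.union hSgLcomp).union hSgRcomp
  have hApre : IsPreconnected A := by
    refine IsPreconnected.union (rK + (c, 0)) (Or.inl hrc2) hrcR ?_ hSgRpre
    exact IsPreconnected.union lK hlKC hlKL hCpre hSgLpre
  have htaM : tK + (a, 0) ∈ M := ⟨tK, htK, rfl⟩
  have htaU : tK + (a, 0) ∈ SgU :=
    ⟨rfl, by show tK.2 ≤ tK.2 + 0; linarith, by show tK.2 + 0 ≤ y₂; rw [hy₂]; linarith⟩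
  have hbaM : bK + (a, 0) ∈ M := ⟨bK, hbKm, rfl⟩
  have hbaD : bK + (a, 0) ∈ SgD :=
    ⟨rfl, by show y₁ ≤ bK.2 + 0; rw [hy₁]; linarith, by show bK.2 + 0 ≤ bK.2; linarith⟩
  have hBcomp : IsCompact B := (hMcomp.union hSgUcomp).union hSgDcomp
  have hBpre : IsPreconnected B := by
    refine IsPreconnected.union (bK + (a, 0)) (Or.inl hbaM) hbaD ?_ hSgDpre
    exact IsPreconnected.union (tK + (a, 0)) htaM htaU hMpre hSgUpre
  -- A and B are disjoint
  have hAB : ∀ z ∈ A, z ∉ B := by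
    rintro z ((hzC | hzL) | hzR) ((hzM | hzU) | hzD)
    · exact hCM z hzC hzM
    · -- C vs SgU : forces z = tK + (a,0) ∈ M
      obtain ⟨hu1, hu2, hu3⟩ := hzU
      have hz2 : z.2 = tK.2 := le_antisymm ((hCsub z hzC).2.2.2) hu2
      have : z = tK + (a, 0) := by
        apply Prod.ext
        · simpa using hu1
        · simpa using hz2
      exact hCM z hzC (this ▸ htaM)
    · obtain ⟨hu1, hu2, hu3⟩ := hzD
      have hz2 : z.2 = bK.2 := le_antisymm hu3 ((hCsub z hzC).2.2.1)
      have : z = bK + (a, 0) := by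
        apply Prod.ext
        · simpa using hu1
        · simpa using hz2
      exact hCM z hzC (this ▸ hbaM)
    · -- SgL vs M
      have h1 := hzL.2.1
      have h2 := (hMsub z hzM).1
      linarith
    · have h1 := hzL.2.1
      have h2 : z.1 = tK.1 + a := hzU.1
      have := hlKmin tK htK
      linarith
    · have h1 := hzL.2.1
      have h2 : z.1 = bK.1 + a := hzD.1
      have := hlKmin bK hbKm
      linarith
    · -- SgR vs M
      have h1 := hzR.1
      have h2 := (hMsub z hzM).2.1
      rw [hc] at h1
      linarith
    · have h1 := hzR.1
      have h2 : z.1 = tK.1 + a := hzU.1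
      have := hrKmax tK htK
      rw [hc] at h1
      linarith
    · have h1 := hzR.1
      have h2 : z.1 = bK.1 + a := hzD.1
      have := hrKmax bK hbKm
      rw [hc] at h1
      linarith
  -- bounding box
  have hAsub : ∀ z ∈ A, x₁ ≤ z.1 ∧ z.1 ≤ x₂ ∧ y₁ ≤ z.2 ∧ z.2 ≤ y₂ := by
    rintro z ((hzC | hzL) | hzR)
    · obtain ⟨k1, k2, k3, k4⟩ := hCsub z hzC
      exact ⟨by rw [hx₁]; linarith, by rw [hx₂]; linarith, by rw [hy₁]; linarith,
        by rw [hy₂]; linarith⟩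
    · obtain ⟨k1, k2, k3⟩ := hzL
      have h4 := hbKmin lK hlK
      have h5 := htKmax lK hlK
      exact ⟨k1, by rw [hx₂, hc]; linarith, by rw [hy₁, k3]; linarith, by rw [hy₂, k3]; linarith⟩
    · obtain ⟨k1, k2, k3⟩ := hzR
      have h4 := hbKmin rK hrK
      have h5 := htKmax rK hrK
      exact ⟨by rw [hx₁, hc] at *; linarith, k2, by rw [hy₁, k3]; linarith, by rw [hy₂, k3]; linarith⟩
  have hBsub : ∀ z ∈ B, x₁ ≤ z.1 ∧ z.1 ≤ x₂ ∧ y₁ ≤ z.2 ∧ z.2 ≤ y₂ := by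
    rintro z ((hzM | hzU) | hzD)
    · obtain ⟨k1, k2, k3, k4⟩ := hMsub z hzM
      exact ⟨by rw [hx₁]; linarith, by rw [hx₂, hc]; linarith, by rw [hy₁]; linarith,
        by rw [hy₂]; linarith⟩
    · obtain ⟨k1, k2, k3⟩ := hzU
      have h4 := hlKmin tK htK
      have h5 := hrKmax tK htK
      have h6 := htKmax tK htK
      exact ⟨by rw [hx₁, k1]; linarith, by rw [hx₂, hc, k1]; linarith,
        by rw [hy₁]; have := hbt; linarith, k3⟩
    · obtain ⟨k1, k2, k3⟩ := hzD
      have h4 := hlKmin bK hbKm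
      have h5 := hrKmax bK hbKm
      exact ⟨by rw [hx₁, k1]; linarith, by rw [hx₂, hc, k1]; linarith, k2,
        by rw [hy₂]; linarith⟩
  -- edge points
  have hzlA : ((x₁, lK.2) : ℝ×ℝ) ∈ A :=
    Or.inl (Or.inr ⟨le_refl _, by show x₁ ≤ lK.1; rw [hx₁]; linarith, rfl⟩)
  have hzrA : ((x₂, rK.2) : ℝ×ℝ) ∈ A :=
    Or.inr ⟨by show rK.1 + c ≤ x₂; rw [hx₂]; linarith, le_refl _, rfl⟩
  have hzbB : ((bK.1 + a, y₁) : ℝ×ℝ) ∈ B :=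
    Or.inr ⟨rfl, le_refl _, by show y₁ ≤ bK.2; rw [hy₁]; linarith⟩
  have hztB : ((tK.1 + a, y₂) : ℝ×ℝ) ∈ B :=
    Or.inl (Or.inr ⟨rfl, by show tK.2 ≤ y₂; rw [hy₂]; linarith, le_refl _⟩)
  exact crossing_lemma x₁ x₂ y₁ y₂ hx12 hy12 A B hAcomp hBcomp hApre hBpre hAB hAsub hBsub
    (x₁, lK.2) (x₂, rK.2) (bK.1 + a, y₁) (tK.1 + a, y₂) hzlA rfl hzrA rfl hzbB rfl hztB rfl

end HopfAux

theorem hopf_theorem_I (K : Set (ℝ × ℝ)) (hne : K.Nonempty) (hcomp : IsCompact K)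
    (hconn : IsConnected K) (a b : ℝ)
    (ha : a ∈ {s : ℝ | 0 < s ∧ ∀ p ∈ K, p + (s, 0) ∉ K})
    (hb : b ∈ {s : ℝ | 0 < s ∧ ∀ p ∈ K, p + (s, 0) ∉ K}) :
    a + b ∈ {s : ℝ | 0 < s ∧ ∀ p ∈ K, p + (s, 0) ∉ K} := by
  obtain ⟨ha0, haK⟩ := ha
  obtain ⟨hb0, hbK⟩ := hb
  refine ⟨by linarith, ?_⟩
  intro p hp hpc
  exact HopfAux.hopf_main K hne hcomp hconn a b ha0 hb0 haK hbK p hp hpc
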